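/- No Martin-Löf random real belongs to KT(Δ⁰₂) or to LK(Δ⁰₂) (in fact, no Martin-Löf random real is K-trivial or low for K even up to the order log n); consequently both KT(Δ⁰₂) and LK(Δ⁰₂) have Lebesgue measure zero. -/

import Mathlib

/-! Common framework: prefix-free Kolmogorov complexity via a universal
prefix-free oracle machine, Δ⁰₂ functions and orders, Turing and wtt
reducibility, Ω, and the uniform measure on Cantor space. -/

/-- Finite binary strings, `2^{<ω}`. -/
abbrev BinStr := List Bool

/-- Reals, i.e. infinite binary sequences `2^ω`. -/
abbrev Seq2 := ℕ → Bool

/-- The initial segment `A↾n` of a real `A ∈ 2^ω`. -/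
def restrict (A : Seq2) (n : ℕ) : BinStr := (List.range n).map A

/-- A prefix-free oracle machine, presented as a computable enumeration of
axioms `(τ, p, y)`, meaning: on any oracle extending `τ`, the machine halts on
program `p` with output `y`.  Consistency says that for compatible oracle
strings the halting programs form a prefix-free set and outputs are unique. -/
structure PrefixOracleMachine where
  axioms : ℕ → Option (BinStr × BinStr × BinStr)
  axioms_computable : Computable axioms
  consistent : ∀ s t τ₁ p₁ y₁ τ₂ p₂ y₂,
    axioms s = some (τ₁, p₁, y₁) → axioms t = some (τ₂, p₂, y₂) →
    (τ₁ <+: τ₂ ∨ τ₂ <+: τ₁) → p₁ <+: p₂ → p₁ = p₂ ∧ y₁ = y₂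

/-- `M.Computes A p y` : with oracle `A`, machine `M` halts on program `p` with
output `y`. -/
def PrefixOracleMachine.Computes (M : PrefixOracleMachine) (A : Seq2) (p y : BinStr) : Prop :=
  ∃ s τ, M.axioms s = some (τ, p, y) ∧ ∃ n, τ = restrict A n

/-- A universal prefix-free oracle machine: it describes every string (relative
to every oracle), and it simulates every prefix-free oracle machine up to an
additive constant in the length of programs. -/
structure UniversalPrefixMachine extends PrefixOracleMachine where
  total : ∀ (A : Seq2) (y : BinStr), ∃ p, toPrefixOracleMachine.Computes A p y
  universal : ∀ M : PrefixOracleMachine, ∃ c : ℕ, ∀ (A : Seq2) (p y : BinStr),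
    M.Computes A p y →
      ∃ q, toPrefixOracleMachine.Computes A q y ∧ q.length ≤ p.length + c

/-- `K^A(y)` : prefix-free Kolmogorov complexity of `y` relative to oracle `A`. -/
noncomputable def KOr (U : UniversalPrefixMachine) (A : Seq2) (y : BinStr) : ℕ :=
  sInf {n | ∃ p : BinStr, p.length = n ∧ U.toPrefixOracleMachine.Computes A p y}

/-- The all-zeros (recursive) oracle. -/
def zeroSeq : Seq2 := fun _ => false

/-- `K(y)` : (unrelativized) prefix-free Kolmogorov complexity. -/
noncomputable def Kc (U : UniversalPrefixMachine) (y : BinStr) : ℕ := KOr U zeroSeq y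

/-- `K(n)` : the complexity of the string of `n` zeros. -/
noncomputable def KcNat (U : UniversalPrefixMachine) (n : ℕ) : ℕ :=
  Kc U (List.replicate n false)

/-- `A ∈ KT(g)` : `A` is K-trivial up to `g`. -/
def KT (U : UniversalPrefixMachine) (g : ℕ → ℕ) (A : Seq2) : Prop :=
  ∃ c : ℕ, ∀ n : ℕ, Kc U (restrict A n) ≤ KcNat U n + g n + c

/-- `A ∈ LK(f)` : `A` is low for K up to `f`. -/
def LK (U : UniversalPrefixMachine) (f : BinStr → ℕ) (A : Seq2) : Prop :=
  ∃ c : ℕ, ∀ σ : BinStr, Kc U σ ≤ KOr U A σ + f σ + c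

/-- The position of a string in the length-lexicographic ordering of `2^{<ω}`. -/
def strNum (σ : BinStr) : ℕ := σ.foldl (fun n b => 2 * n + (if b then 2 else 1)) 0

/-- A function `ℕ → ℕ` is Δ⁰₂ iff it has a recursive approximation. -/
def Delta02Fun (g : ℕ → ℕ) : Prop :=
  ∃ G : ℕ → ℕ → ℕ, Computable₂ G ∧ ∀ x, ∃ t, ∀ s ≥ t, G s x = g x

/-- A function `2^{<ω} → ℕ` is Δ⁰₂ iff it has a recursive approximation. -/
def Delta02StrFun (f : BinStr → ℕ) : Prop :=
  ∃ F : ℕ → BinStr → ℕ, Computable₂ F ∧ ∀ σ, ∃ t, ∀ s ≥ t, F s σ = f σ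

/-- A real is Δ⁰₂ iff it has a recursive approximation. -/
def Delta02Seq (A : Seq2) : Prop :=
  ∃ F : ℕ → ℕ → Bool, Computable₂ F ∧ ∀ x, ∃ t, ∀ s ≥ t, F s x = A x

/-- An order: an unbounded nondecreasing function `ℕ → ℕ`. -/
def IsOrder (g : ℕ → ℕ) : Prop := Monotone g ∧ ∀ b : ℕ, ∃ m, b < g m

/-- An order on strings: unbounded and nondecreasing with respect to the
length-lexicographic ordering of `2^{<ω}`. -/
def IsStrOrder (f : BinStr → ℕ) : Prop :=
  (∀ σ τ : BinStr, strNum σ ≤ strNum τ → f σ ≤ f τ) ∧ ∀ b : ℕ, ∃ σ, b < f σ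

/-- `A ∈ KT(Δ⁰₂)` : `A` is K-trivial up to every Δ⁰₂ order. -/
def KTDelta (U : UniversalPrefixMachine) (A : Seq2) : Prop :=
  ∀ g : ℕ → ℕ, Delta02Fun g → IsOrder g → KT U g A

/-- `A ∈ LK(Δ⁰₂)` : `A` is low for K up to every Δ⁰₂ order. -/
def LKDelta (U : UniversalPrefixMachine) (A : Seq2) : Prop :=
  ∀ f : BinStr → ℕ, Delta02StrFun f → IsStrOrder f → LK U f A

/-- A Δ⁰₂ function is finite-to-one approximable if it has a recursive
approximation `F` such that for every `n`, for all but finitely many `m`,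
`F s m > n` for all stages `s`. -/
def FinToOneApprox (f : ℕ → ℕ) : Prop :=
  ∃ F : ℕ → ℕ → ℕ, Computable₂ F ∧ (∀ x, ∃ t, ∀ s ≥ t, F s x = f x) ∧
    ∀ n : ℕ, {m : ℕ | ∃ s, F s m ≤ n}.Finite

/-- A Turing functional, presented as a computable enumeration of axioms
`(τ, n, b)`, meaning: on any oracle extending `τ`, the output bit `n` is `b`. -/
structure TuringFunctional where
  axioms : ℕ → Option (BinStr × ℕ × Bool)
  axioms_computable : Computable axioms
  consistent : ∀ s t τ₁ n₁ b₁ τ₂ n₂ b₂,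
    axioms s = some (τ₁, n₁, b₁) → axioms t = some (τ₂, n₂, b₂) →
    (τ₁ <+: τ₂ ∨ τ₂ <+: τ₁) → n₁ = n₂ → b₁ = b₂

/-- `Φ.Computes B A` : `Φ^B = A`. -/
def TuringFunctional.Computes (Φ : TuringFunctional) (B A : Seq2) : Prop :=
  ∀ n : ℕ, ∃ s k, Φ.axioms s = some (restrict B k, n, A n)

/-- Turing reducibility `A ≤_T B`. -/
def TuringLE (A B : Seq2) : Prop := ∃ Φ : TuringFunctional, Φ.Computes B A

/-- Weak truth-table reducibility `A ≤_wtt B` : a Turing reduction whose use is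
bounded by a recursive function. -/
def WttLE (A B : Seq2) : Prop :=
  ∃ (Φ : TuringFunctional) (u : ℕ → ℕ), Computable u ∧
    ∀ n : ℕ, ∃ s k, k ≤ u n ∧ Φ.axioms s = some (restrict B k, n, A n)

/-- The effective join `A ⊕ B`. -/
def join (A B : Seq2) : Seq2 := fun n => if n % 2 = 0 then A (n / 2) else B (n / 2)

/-- `A` is Martin-Löf random: `K(A↾n) ≥ n - c` for all `n`. -/
def MLRandom (U : UniversalPrefixMachine) (A : Seq2) : Prop :=
  ∃ c : ℕ, ∀ n : ℕ, n ≤ Kc U (restrict A n) + c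

/-- `A` is infinitely often K-trivial. -/
def InfOftenKTrivial (U : UniversalPrefixMachine) (A : Seq2) : Prop :=
  ∃ c : ℕ, {n : ℕ | Kc U (restrict A n) ≤ KcNat U n + c}.Infinite

/-- K-reducibility `B ≤_K A`. -/
def KLE (U : UniversalPrefixMachine) (B A : Seq2) : Prop :=
  ∃ c : ℕ, ∀ n : ℕ, Kc U (restrict B n) ≤ Kc U (restrict A n) + c

/-- LK-reducibility `A ≤_LK B`. -/
def LKLE (U : UniversalPrefixMachine) (A B : Seq2) : Prop :=
  ∃ c : ℕ, ∀ σ : BinStr, KOr U B σ ≤ KOr U A σ + c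

/-- `A` is weakly low for K: `K(σ) ≤ K^A(σ) + c` for infinitely many strings σ. -/
def WeaklyLowForK (U : UniversalPrefixMachine) (A : Seq2) : Prop :=
  ∃ c : ℕ, {σ : BinStr | Kc U σ ≤ KOr U A σ + c}.Infinite

/-- Chaitin's Ω : the measure of the domain of the universal machine. -/
noncomputable def Omega (U : UniversalPrefixMachine) : ℝ :=
  ∑' p : {p : BinStr // ∃ y, U.toPrefixOracleMachine.Computes zeroSeq p y},
    ((2 : ℝ) ^ (p : BinStr).length)⁻¹

/-- The `n`-th binary digit of a real number `x`. -/
noncomputable def realBit (x : ℝ) (n : ℕ) : Bool :=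
  decide (⌊x * 2 ^ (n + 1)⌋ % 2 = 1)

/-- `Ω↾n` : the length-`n` initial segment of the binary expansion of Ω. -/
noncomputable def omegaStr (U : UniversalPrefixMachine) (n : ℕ) : BinStr :=
  (List.range n).map (realBit (Omega U))

/-- `A` is low for Ω. -/
def LowForOmega (U : UniversalPrefixMachine) (A : Seq2) : Prop :=
  ∀ c : ℕ, ∃ n : ℕ, KOr U A (omegaStr U n) + c < n

/-- The uniform (coin-flipping) measure on `2^ω`, obtained as the image of
Lebesgue measure on `[0,1]` under the binary-expansion map. -/
noncomputable def cantorMeasure : MeasureTheory.Measure Seq2 :=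
  MeasureTheory.Measure.map (fun x : ℝ => fun n : ℕ => realBit x n)
    (MeasureTheory.volume.restrict (Set.Icc (0 : ℝ) 1))


/-! ### Auxiliary development -/

section Aux

open MeasureTheory
open scoped ENNReal

/- ## restrict basics -/

lemma restrict_length' (A : Seq2) (n : ℕ) : (restrict A n).length = n := by simp [restrict]

lemma restrict_prefix' (A : Seq2) {m n : ℕ} (h : m ≤ n) : restrict A m <+: restrict A n := by
  have : List.range m <+: List.range n := ⟨List.range' m (n-m), by
    rw [List.range_eq_range', List.range_eq_range']
    have := List.range'_append (s := 0) (m := m) (n := n-m) (step := 1)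
    simp at this
    rw [show m + (n - m) = n by omega] at this
    exact this⟩
  exact this.map A

lemma restrict_comparable (A : Seq2) (m n : ℕ) :
    restrict A m <+: restrict A n ∨ restrict A n <+: restrict A m := by
  rcases le_total m n with h | h
  · exact Or.inl (restrict_prefix' A h)
  · exact Or.inr (restrict_prefix' A h)

/- ## Nat.log 2 is primitive recursive -/

private def logStep : ℕ → ℕ → ℕ := fun y IH => if 2 ^ (IH + 1) ≤ y + 1 then IH + 1 else IH

private lemma log_eq_rec (n : ℕ) : Nat.log 2 n = Nat.rec 0 logStep n := by
  induction n with
  | zero => simp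
  | succ n ih =>
    show Nat.log 2 (n+1) = logStep n (Nat.rec 0 logStep n)
    rw [← ih, logStep]
    split
    · rename_i h
      have h1 : Nat.log 2 n + 1 ≤ Nat.log 2 (n+1) := by
        have := (Nat.le_log_iff_pow_le one_lt_two (Nat.succ_ne_zero n)).2 h; simpa using this
      have h2 : Nat.log 2 (n+1) ≤ Nat.log 2 n + 1 := by
        rcases Nat.eq_zero_or_pos n with rfl | hn
        · simp at h
        · calc Nat.log 2 (n+1) ≤ Nat.log 2 (n*2) := Nat.log_mono_right (by omega)
            _ = Nat.log 2 n + 1 := Nat.log_mul_base one_lt_two hn.ne'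
      omega
    · rename_i h
      have h1 : Nat.log 2 n ≤ Nat.log 2 (n+1) := Nat.log_mono_right (by omega)
      have h2 : Nat.log 2 (n+1) ≤ Nat.log 2 n := by
        by_contra hc
        have h3 : 2 ^ (Nat.log 2 n + 1) ≤ n + 1 := by
          have := (Nat.le_log_iff_pow_le one_lt_two (Nat.succ_ne_zero n)).1
            (show Nat.log 2 n + 1 ≤ Nat.log 2 n.succ by simp only [Nat.succ_eq_add_one]; omega)
          simpa using this
        exact h h3
      omega

lemma primrec_pow : Primrec₂ ((· ^ ·) : ℕ → ℕ → ℕ) := Primrec₂.unpaired'.1 Nat.Primrec.pow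

lemma primrec_log : Primrec (Nat.log 2) := by
  have : Primrec (fun n => (Nat.rec 0 logStep n : ℕ)) := by
    apply Primrec.nat_rec₁
    have hc : PrimrecPred (fun p : ℕ × ℕ => 2 ^ (p.2 + 1) ≤ p.1 + 1) :=
      Primrec.nat_le.comp (primrec_pow.comp (Primrec.const 2) (Primrec.succ.comp Primrec.snd))
        (Primrec.succ.comp Primrec.fst)
    exact Primrec₂.of_eq (Primrec.ite hc (Primrec.succ.comp Primrec.snd) Primrec.snd).to₂
      (fun y IH => rfl)
  exact this.of_eq fun n => (log_eq_rec n).symm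

/- ## a prefix-free code for the integers -/

def enc (n : ℕ) : BinStr :=
  List.replicate (Nat.log 2 n + 1) true ++ false :: (List.range (Nat.log 2 n + 1)).map n.testBit

lemma enc_length (n : ℕ) : (enc n).length = 2 * Nat.log 2 n + 3 := by
  simp [enc]; ring

lemma enc_getElem_lt (n i : ℕ) (h : i < Nat.log 2 n + 1) (h2 : i < (enc n).length) :
    (enc n)[i] = true := by
  simp only [enc]
  rw [List.getElem_append_left (by simpa using h), List.getElem_replicate]

lemma enc_getElem_eq (n : ℕ) (h2 : Nat.log 2 n + 1 < (enc n).length) :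
    (enc n)[Nat.log 2 n + 1] = false := by
  simp only [enc]
  rw [List.getElem_append_right (by simp)]
  simp

lemma enc_prefix {a b : ℕ} (h : enc a <+: enc b) : a = b := by
  have hla : Nat.log 2 a ≤ Nat.log 2 b := by
    have hlen := h.length_le
    rw [enc_length, enc_length] at hlen; omega
  have heq : Nat.log 2 a = Nat.log 2 b := by
    by_contra hne
    have hlt : Nat.log 2 a + 1 < Nat.log 2 b + 1 := by omega
    have h1 : (enc a)[Nat.log 2 a + 1]'(by rw [enc_length]; omega) = false :=
      enc_getElem_eq a (by rw [enc_length]; omega)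
    have h2 : (enc b)[Nat.log 2 a + 1]'(by rw [enc_length]; omega) = true :=
      enc_getElem_lt b _ hlt _
    rw [h.getElem (by rw [enc_length]; omega)] at h1
    rw [h1] at h2; exact Bool.false_ne_true h2
  have hll : (enc a).length = (enc b).length := by rw [enc_length, enc_length, heq]
  have heqL : enc a = enc b := h.eq_of_length hll
  have hbits : (List.range (Nat.log 2 b + 1)).map a.testBit
      = (List.range (Nat.log 2 b + 1)).map b.testBit := by
    have := heqL
    simp only [enc] at this
    rw [heq] at this
    exact List.tail_eq_of_cons_eq (List.append_cancel_left this)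
  apply Nat.eq_of_testBit_eq
  intro i
  by_cases hi : i < Nat.log 2 b + 1
  · have h3 := congrArg (fun l : List Bool => l[i]?) hbits
    simp only [List.getElem?_map, List.getElem?_range, hi, if_pos] at h3
    simpa using h3
  · have ha : a.testBit i = false :=
      Nat.testBit_lt_two_pow ((Nat.lt_pow_succ_log_self one_lt_two a).trans_le
        (Nat.pow_le_pow_right (by norm_num) (by omega)))
    have hb : b.testBit i = false :=
      Nat.testBit_lt_two_pow ((Nat.lt_pow_succ_log_self one_lt_two b).trans_le
        (Nat.pow_le_pow_right (by norm_num) (by omega)))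
    rw [ha, hb]

/- ## computability facts -/

open Primrec in
lemma primrec_testBit : Primrec₂ Nat.testBit := by
  have h : Primrec₂ (fun n i : ℕ => (n / 2 ^ i) % 2) :=
    (nat_mod.comp (nat_div.comp fst (primrec_pow.comp (const 2) snd)) (const 2)).to₂
  have : Primrec₂ (fun n i : ℕ => decide (n / 2 ^ i % 2 = 1)) :=
    (Primrec.beq.comp (h.comp fst snd) (const 1)).to₂
  exact this.of_eq fun n i => (Nat.testBit_eq_decide_div_mod_eq).symm

open Primrec in
lemma primrec_replicate_true : Primrec (fun k : ℕ => List.replicate k true) :=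
  ((list_map list_range ((const true).comp₂ Primrec₂.right)).of_eq fun k => by
    simpa using List.map_const (List.range k) true)

open Primrec in
lemma primrec_replicate_false : Primrec (fun k : ℕ => List.replicate k false) :=
  ((list_map list_range ((const false).comp₂ Primrec₂.right)).of_eq fun k => by
    simpa using List.map_const (List.range k) false)

open Primrec in
lemma primrec_enc : Primrec enc := by
  have h1 : Primrec (fun n : ℕ => List.replicate (Nat.log 2 n + 1) true) :=
    primrec_replicate_true.comp (succ.comp primrec_log)
  have h2 : Primrec (fun n : ℕ => (List.range (Nat.log 2 n + 1)).map n.testBit) :=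
    list_map (list_range.comp (succ.comp primrec_log)) (primrec_testBit.comp fst snd)
  have := list_append.comp h1 (list_cons.comp (const false) h2)
  exact this.of_eq fun n => rfl

lemma comp_M1ax : Computable (fun s : ℕ => (some ([], enc s, List.replicate s false) :
    Option (BinStr × BinStr × BinStr))) := by
  have : Primrec (fun s : ℕ => (some ([], enc s, List.replicate s false) :
      Option (BinStr × BinStr × BinStr))) :=
    Primrec.option_some.comp ((Primrec.const []).pair (primrec_enc.pair primrec_replicate_false))
  exact this.to_comp

lemma comp_M2ax : Computable (fun s : ℕ =>
    (Encodable.decode s : Option BinStr).map (fun σ => (σ, enc σ.length, σ))) := by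
  have hg : Computable₂ (fun (_ : ℕ) (σ : BinStr) => (σ, enc σ.length, σ)) :=
    (Primrec.snd.pair ((primrec_enc.comp (Primrec.list_length.comp Primrec.snd)).pair
      Primrec.snd)).to_comp
  exact Computable.option_map Computable.decode hg

lemma comp_logfun : Computable₂ (fun (_ s : ℕ) => Nat.log 2 s) :=
  (primrec_log.comp Primrec.snd).to_comp

lemma comp_logstr : Computable₂ (fun (_ : ℕ) (σ : BinStr) => Nat.log 2 σ.length) :=
  ((primrec_log.comp (Primrec.list_length.comp Primrec.snd))).to_comp

/- ## the two auxiliary machines and complexity upper bounds -/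

def M1 : PrefixOracleMachine where
  axioms := fun s => some ([], enc s, List.replicate s false)
  axioms_computable := comp_M1ax
  consistent := by
    intro s t τ₁ p₁ y₁ τ₂ p₂ y₂ h1 h2 _ hp
    have h1' := Option.some.inj h1
    have h2' := Option.some.inj h2
    obtain ⟨e1, e2, e3⟩ : ([] : BinStr) = τ₁ ∧ enc s = p₁ ∧ List.replicate s false = y₁ :=
      ⟨congrArg Prod.fst h1', congrArg (Prod.fst ∘ Prod.snd) h1',
        congrArg (Prod.snd ∘ Prod.snd) h1'⟩
    obtain ⟨f1, f2, f3⟩ : ([] : BinStr) = τ₂ ∧ enc t = p₂ ∧ List.replicate t false = y₂ :=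
      ⟨congrArg Prod.fst h2', congrArg (Prod.fst ∘ Prod.snd) h2',
        congrArg (Prod.snd ∘ Prod.snd) h2'⟩
    subst e1; subst e2; subst e3; subst f1; subst f2; subst f3
    have : s = t := enc_prefix hp
    subst this
    exact ⟨rfl, rfl⟩

lemma M1_computes (A : Seq2) (n : ℕ) : M1.Computes A (enc n) (List.replicate n false) :=
  ⟨n, [], rfl, 0, by simp [restrict]⟩

def M2 : PrefixOracleMachine where
  axioms := fun s => (Encodable.decode s : Option BinStr).map (fun σ => (σ, enc σ.length, σ))
  axioms_computable := comp_M2ax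
  consistent := by
    intro s t τ₁ p₁ y₁ τ₂ p₂ y₂ h1 h2 hor hp
    rcases Option.map_eq_some_iff.1 h1 with ⟨σ₁, _, hmk1⟩
    rcases Option.map_eq_some_iff.1 h2 with ⟨σ₂, _, hmk2⟩
    obtain ⟨e1, e2, e3⟩ : σ₁ = τ₁ ∧ enc σ₁.length = p₁ ∧ σ₁ = y₁ :=
      ⟨congrArg Prod.fst hmk1, congrArg (Prod.fst ∘ Prod.snd) hmk1,
        congrArg (Prod.snd ∘ Prod.snd) hmk1⟩
    obtain ⟨f1, f2, f3⟩ : σ₂ = τ₂ ∧ enc σ₂.length = p₂ ∧ σ₂ = y₂ :=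
      ⟨congrArg Prod.fst hmk2, congrArg (Prod.fst ∘ Prod.snd) hmk2,
        congrArg (Prod.snd ∘ Prod.snd) hmk2⟩
    subst e1; subst e2; subst e3; subst f1; subst f2; subst f3
    have hl : σ₁.length = σ₂.length := enc_prefix hp
    have : σ₁ = σ₂ := by
      rcases hor with h | h
      · exact h.eq_of_length hl
      · exact (h.eq_of_length hl.symm).symm
    subst this
    exact ⟨rfl, rfl⟩

lemma M2_computes (A : Seq2) (n : ℕ) : M2.Computes A (enc n) (restrict A n) := by
  refine ⟨Encodable.encode (restrict A n), restrict A n, ?_, n, rfl⟩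
  show (Encodable.decode (Encodable.encode (restrict A n)) : Option BinStr).map _ = _
  rw [Encodable.encodek]
  simp [restrict_length']

/- ## K basics -/

lemma KOr_spec (U : UniversalPrefixMachine) (A : Seq2) (y : BinStr) :
    ∃ p : BinStr, p.length = KOr U A y ∧ U.toPrefixOracleMachine.Computes A p y := by
  have hne : {n | ∃ p : BinStr, p.length = n ∧ U.toPrefixOracleMachine.Computes A p y}.Nonempty := by
    obtain ⟨p, hp⟩ := U.total A y
    exact ⟨p.length, p, rfl, hp⟩
  exact Nat.sInf_mem hne

lemma KOr_le (U : UniversalPrefixMachine) (A : Seq2) {p y : BinStr}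
    (h : U.toPrefixOracleMachine.Computes A p y) : KOr U A y ≤ p.length :=
  Nat.sInf_le ⟨p, rfl, h⟩

lemma U_prefix_free (U : UniversalPrefixMachine) (A : Seq2) {p q y z : BinStr}
    (hp : U.toPrefixOracleMachine.Computes A p y) (hq : U.toPrefixOracleMachine.Computes A q z)
    (hpq : p <+: q) : p = q ∧ y = z := by
  obtain ⟨s, τ₁, ha1, n₁, rfl⟩ := hp
  obtain ⟨t, τ₂, ha2, n₂, rfl⟩ := hq
  exact U.consistent s t _ p y _ q z ha1 ha2 (restrict_comparable A n₁ n₂) hpq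

/- complexity upper bounds from M1 and M2 -/

lemma KcNat_bound (U : UniversalPrefixMachine) :
    ∃ c, ∀ n, KcNat U n ≤ 2 * Nat.log 2 n + 3 + c := by
  obtain ⟨c, hc⟩ := U.universal M1
  refine ⟨c, fun n => ?_⟩
  obtain ⟨q, hq, hlen⟩ := hc zeroSeq (enc n) (List.replicate n false) (M1_computes zeroSeq n)
  calc KcNat U n ≤ q.length := KOr_le U zeroSeq hq
    _ ≤ (enc n).length + c := hlen
    _ = 2 * Nat.log 2 n + 3 + c := by rw [enc_length]

lemma KOr_restrict_bound (U : UniversalPrefixMachine) :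
    ∃ c, ∀ (A : Seq2) (n : ℕ), KOr U A (restrict A n) ≤ 2 * Nat.log 2 n + 3 + c := by
  obtain ⟨c, hc⟩ := U.universal M2
  refine ⟨c, fun A n => ?_⟩
  obtain ⟨q, hq, hlen⟩ := hc A (enc n) (restrict A n) (M2_computes A n)
  calc KOr U A (restrict A n) ≤ q.length := KOr_le U A hq
    _ ≤ (enc n).length + c := hlen
    _ = 2 * Nat.log 2 n + 3 + c := by rw [enc_length]

/- growth lemma -/

private lemma four_mul_le_pow {m : ℕ} (h : 5 ≤ m) : 4 * m + 4 ≤ 2 ^ m := by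
  induction m with
  | zero => omega
  | succ m ih =>
    rcases Nat.lt_or_ge m 5 with hm | hm
    · interval_cases m <;> simp_all <;> omega
    · have := ih (by omega)
      have : 2 ^ m + 2 ^ m = 2 ^ (m+1) := by ring
      have h8 : 8 ≤ 2 ^ m := by
        calc 8 ≤ 4 * m + 4 := by omega
          _ ≤ 2 ^ m := ih (by omega)
      calc 4 * (m+1) + 4 = (4 * m + 4) + 4 := by ring
        _ ≤ 2 ^ m + 2 ^ m := by omega
        _ = 2 ^ (m+1) := by ring

lemma log_growth (C : ℕ) : ∃ n : ℕ, 3 * Nat.log 2 n + C < n := by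
  refine ⟨2 ^ (C + 5), ?_⟩
  rw [Nat.log_pow one_lt_two]
  have := four_mul_le_pow (m := C + 5) (by omega)
  omega

/- ## natVal and the binary expansion -/

def natVal (σ : BinStr) : ℕ := σ.foldl (fun n b => 2 * n + cond b 1 0) 0

lemma natVal_concat (σ : BinStr) (b : Bool) : natVal (σ ++ [b]) = 2 * natVal σ + cond b 1 0 := by
  simp [natVal, List.foldl_append]

lemma natVal_lt (σ : BinStr) : natVal σ < 2 ^ σ.length := by
  induction σ using List.reverseRecOn with
  | nil => simp [natVal]
  | append_singleton σ b ih =>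
    rw [natVal_concat]
    simp only [List.length_append, List.length_cons, List.length_nil, pow_succ]
    cases b <;> simp <;> omega

lemma natVal_inj : ∀ (n : ℕ) (σ τ : BinStr), σ.length = n → τ.length = n →
    natVal σ = natVal τ → σ = τ := by
  intro n
  induction n with
  | zero => intro σ τ h1 h2 _; rw [List.length_eq_zero_iff] at h1 h2; rw [h1, h2]
  | succ n ih =>
    intro σ τ h1 h2 hv
    rcases σ.eq_nil_or_concat with rfl | ⟨σ', b, rfl⟩
    · simp at h1
    rcases τ.eq_nil_or_concat with rfl | ⟨τ', c, rfl⟩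
    · simp at h2
    simp only [List.concat_eq_append] at h1 h2 hv ⊢
    rw [natVal_concat, natVal_concat] at hv
    have hbc : b = c := by cases b <;> cases c <;> simp at hv ⊢ <;> omega
    have hv' : natVal σ' = natVal τ' := by cases b <;> cases c <;> simp at hv hbc <;> omega
    simp only [List.length_append, List.length_cons, List.length_nil] at h1 h2
    rw [ih σ' τ' (by omega) (by omega) hv', hbc]

lemma restrict_succ (A : Seq2) (n : ℕ) : restrict A (n + 1) = restrict A n ++ [A n] := by
  simp [restrict, List.range_succ]

lemma floor_two_mul (y : ℝ) : ⌊2 * y⌋ = 2 * ⌊y⌋ ∨ ⌊2 * y⌋ = 2 * ⌊y⌋ + 1 := by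
  have h1 : (2 : ℝ) * ⌊y⌋ ≤ 2 * y := by
    have := Int.floor_le y; linarith
  have h2 : 2 * y < 2 * (⌊y⌋ + 1) := by
    have := Int.lt_floor_add_one y; linarith
  have l1 : 2 * ⌊y⌋ ≤ ⌊2 * y⌋ := Int.le_floor.2 (by push_cast; linarith)
  have l2 : ⌊2 * y⌋ < 2 * ⌊y⌋ + 2 := by
    have : (2 : ℝ) * y < ((2 * ⌊y⌋ + 2 : ℤ) : ℝ) := by push_cast; linarith
    exact_mod_cast Int.floor_lt.2 this
  omega

lemma floor_pow_eq_natVal {x : ℝ} (hx : x ∈ Set.Ico (0:ℝ) 1) (n : ℕ) :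
    ⌊x * 2 ^ n⌋ = (natVal (restrict (fun k => realBit x k) n) : ℤ) := by
  induction n with
  | zero => simp [restrict, natVal, Int.floor_eq_zero_iff, hx.1, hx.2]
  | succ n ih =>
    have hxy : x * 2 ^ (n + 1) = 2 * (x * 2 ^ n) := by ring
    rw [restrict_succ, natVal_concat]
    have hb : realBit x n = decide (⌊x * 2 ^ (n+1)⌋ % 2 = 1) := rfl
    rcases floor_two_mul (x * 2 ^ n) with h | h
    · have hm : ⌊x * 2 ^ (n+1)⌋ % 2 = 0 := by rw [hxy, h]; omega
      have : realBit x n = false := by rw [hb]; simp [hm]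
      rw [this, hxy, h, ih]; simp
    · have hm : ⌊x * 2 ^ (n+1)⌋ % 2 = 1 := by rw [hxy, h]; omega
      have : realBit x n = true := by rw [hb]; simp [hm]
      rw [this, hxy, h, ih]; simp

lemma mem_interval_iff_bits {σ : BinStr} {x : ℝ} (hx : x ∈ Set.Ico (0:ℝ) 1) :
    restrict (fun k => realBit x k) σ.length = σ ↔
      x ∈ Set.Ico ((natVal σ : ℝ) / 2 ^ σ.length) ((natVal σ + 1 : ℝ) / 2 ^ σ.length) := by
  set n := σ.length with hn
  have h2 : (0:ℝ) < 2 ^ n := by positivity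
  constructor
  · intro h
    have := floor_pow_eq_natVal hx n
    rw [h] at this
    constructor
    · rw [div_le_iff₀ h2]
      calc (natVal σ : ℝ) = ((natVal σ : ℤ) : ℝ) := by push_cast; ring
        _ ≤ x * 2 ^ n := by rw [← this]; exact Int.floor_le _
    · rw [lt_div_iff₀ h2]
      calc x * 2 ^ n < ⌊x * 2 ^ n⌋ + 1 := Int.lt_floor_add_one _
        _ = (natVal σ + 1 : ℝ) := by rw [this]; push_cast; ring
  · intro h
    have hfl : ⌊x * 2 ^ n⌋ = (natVal σ : ℤ) := by
      rw [Int.floor_eq_iff]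
      constructor
      · push_cast
        calc (natVal σ : ℝ) = (natVal σ : ℝ) / 2 ^ n * 2 ^ n := by field_simp
          _ ≤ x * 2 ^ n := by
            apply mul_le_mul_of_nonneg_right h.1 (le_of_lt h2)
      · push_cast
        calc x * 2 ^ n < (natVal σ + 1 : ℝ) / 2 ^ n * 2 ^ n := by
              apply mul_lt_mul_of_pos_right h.2 h2
          _ = natVal σ + 1 := by field_simp
    have := floor_pow_eq_natVal hx n
    rw [hfl] at this
    exact natVal_inj n _ _ (by simp [restrict]) hn.symm (by exact_mod_cast this.symm)

/- ## cylinders and the uniform measure -/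

noncomputable def bitMap : ℝ → Seq2 := fun x n => realBit x n

lemma measurable_bitMap : Measurable bitMap := by
  apply measurable_pi_lambda
  intro n
  have h1 : Measurable (fun x : ℝ => ⌊x * 2 ^ (n + 1)⌋) :=
    Int.measurable_floor.comp (measurable_id.mul_const _)
  exact (measurable_from_top (f := fun z : ℤ => decide (z % 2 = 1))).comp h1

def Cyl (σ : BinStr) : Set Seq2 := {A | restrict A σ.length = σ}

lemma mem_Cyl_iff (σ : BinStr) (A : Seq2) :
    A ∈ Cyl σ ↔ ∀ i < σ.length, A i = σ.getD i false := by
  constructor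
  · intro h i hi
    have : (restrict A σ.length).getD i false = σ.getD i false := by rw [h]
    rwa [restrict, List.getD_eq_getElem?_getD, List.getElem?_map, List.getElem?_range hi] at this
  · intro h
    apply List.ext_getElem (by simp [restrict])
    intro i h1 h2
    simp only [restrict, List.getElem_map, List.getElem_range]
    rw [← List.getD_eq_getElem σ false h2]
    exact h i h2

lemma measurable_Cyl (σ : BinStr) : MeasurableSet (Cyl σ) := by
  have : Cyl σ = ⋂ i ∈ Finset.range σ.length, (fun A : Seq2 => A i) ⁻¹' {σ.getD i false} := by
    ext A
    simp [mem_Cyl_iff]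
  rw [this]
  exact MeasurableSet.biInter (Set.to_countable _)
    (fun i _ => (measurable_pi_apply i) (MeasurableSet.singleton _))

lemma cantorMeasure_apply {S : Set Seq2} (hS : MeasurableSet S) :
    cantorMeasure S = volume (bitMap ⁻¹' S ∩ Set.Icc (0:ℝ) 1) := by
  rw [cantorMeasure, show (fun x : ℝ => fun n : ℕ => realBit x n) = bitMap from rfl,
    Measure.map_apply measurable_bitMap hS, Measure.restrict_apply (measurable_bitMap hS)]

lemma cantorMeasure_Cyl_le (σ : BinStr) :
    cantorMeasure (Cyl σ) ≤ ((2 : ℝ≥0∞) ^ σ.length)⁻¹ := by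
  rw [cantorMeasure_apply (measurable_Cyl σ)]
  set n := σ.length
  set k := natVal σ
  have hk : k < 2 ^ n := natVal_lt σ
  have hsub : bitMap ⁻¹' Cyl σ ∩ Set.Icc (0:ℝ) 1 ⊆
      Set.Icc ((k:ℝ)/2^n) ((k+1:ℝ)/2^n) ∪ {1} := by
    rintro x ⟨hx1, hx2⟩
    rcases eq_or_lt_of_le hx2.2 with h1 | h1
    · right; exact h1
    · left
      have hxI : x ∈ Set.Ico (0:ℝ) 1 := ⟨hx2.1, h1⟩
      have := (mem_interval_iff_bits (σ := σ) hxI).1 hx1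
      exact ⟨this.1, le_of_lt this.2⟩
  calc volume (bitMap ⁻¹' Cyl σ ∩ Set.Icc (0:ℝ) 1)
      ≤ volume (Set.Icc ((k:ℝ)/2^n) ((k+1:ℝ)/2^n) ∪ {1}) := measure_mono hsub
    _ ≤ volume (Set.Icc ((k:ℝ)/2^n) ((k+1:ℝ)/2^n)) + volume ({1} : Set ℝ) := measure_union_le _ _
    _ = ENNReal.ofReal ((k+1:ℝ)/2^n - (k:ℝ)/2^n) := by
        rw [Real.volume_Icc, Real.volume_singleton, add_zero]
    _ = ((2 : ℝ≥0∞) ^ n)⁻¹ := by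
        have h2 : (0:ℝ) < 2 ^ n := by positivity
        rw [show (k+1:ℝ)/2^n - (k:ℝ)/2^n = (2^n:ℝ)⁻¹ by field_simp; ring]
        rw [ENNReal.ofReal_inv_of_pos h2, ENNReal.ofReal_pow (by norm_num)]
        norm_num

lemma cantorMeasure_Cyl_ge (σ : BinStr) :
    ((2 : ℝ≥0∞) ^ σ.length)⁻¹ ≤ cantorMeasure (Cyl σ) := by
  rw [cantorMeasure_apply (measurable_Cyl σ)]
  set n := σ.length
  set k := natVal σ
  have hk : k < 2 ^ n := natVal_lt σ
  have h2 : (0:ℝ) < 2 ^ n := by positivity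
  have hsub : Set.Ico ((k:ℝ)/2^n) ((k+1:ℝ)/2^n) ⊆ bitMap ⁻¹' Cyl σ ∩ Set.Icc (0:ℝ) 1 := by
    intro x hx
    have hxI : x ∈ Set.Ico (0:ℝ) 1 := by
      constructor
      · exact le_trans (by positivity) hx.1
      · calc x < (k+1:ℝ)/2^n := hx.2
          _ ≤ 1 := by
            rw [div_le_one h2]
            exact_mod_cast hk
    refine ⟨?_, ⟨hxI.1, le_of_lt hxI.2⟩⟩
    show restrict (fun m => realBit x m) σ.length = σ
    exact (mem_interval_iff_bits hxI).2 (by exact_mod_cast hx)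
  calc ((2 : ℝ≥0∞) ^ n)⁻¹
      = volume (Set.Ico ((k:ℝ)/2^n) ((k+1:ℝ)/2^n)) := by
        rw [Real.volume_Ico]
        rw [show (k+1:ℝ)/2^n - (k:ℝ)/2^n = (2^n:ℝ)⁻¹ by field_simp; ring]
        rw [ENNReal.ofReal_inv_of_pos h2, ENNReal.ofReal_pow (by norm_num)]
        norm_num
    _ ≤ _ := measure_mono hsub

lemma cantorMeasure_univ_le : cantorMeasure (Set.univ : Set Seq2) ≤ 1 := by
  rw [cantorMeasure_apply MeasurableSet.univ]
  calc volume (bitMap ⁻¹' Set.univ ∩ Set.Icc (0:ℝ) 1) ≤ volume (Set.Icc (0:ℝ) 1) :=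
        measure_mono Set.inter_subset_right
    _ = 1 := by rw [Real.volume_Icc]; norm_num

lemma Cyl_disjoint {σ τ : BinStr} (h : ¬ (σ <+: τ) ∧ ¬ (τ <+: σ)) :
    Disjoint (Cyl σ) (Cyl τ) := by
  rw [Set.disjoint_iff_inter_eq_empty]
  ext A
  simp only [Set.mem_inter_iff, Set.mem_empty_iff_false, iff_false, not_and]
  intro h1 h2
  rcases le_total σ.length τ.length with hl | hl
  · exact h.1 (by rw [← h1, ← h2]; exact restrict_prefix' A hl)
  · exact h.2 (by rw [← h1, ← h2]; exact restrict_prefix' A hl)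

lemma kraft {ι : Type} [Countable ι] (p : ι → BinStr)
    (hpf : ∀ a b, p a <+: p b → a = b) :
    ∑' a : ι, ((2 : ℝ≥0∞) ^ (p a).length)⁻¹ ≤ 1 := by
  have hdisj : Pairwise (Function.onFun Disjoint fun a : ι => Cyl (p a)) := by
    intro a b hab
    apply Cyl_disjoint
    exact ⟨fun hp => hab (hpf a b hp), fun hp => hab (hpf b a hp).symm⟩
  calc ∑' a : ι, ((2 : ℝ≥0∞) ^ (p a).length)⁻¹
      ≤ ∑' a : ι, cantorMeasure (Cyl (p a)) :=
        ENNReal.tsum_le_tsum fun a => cantorMeasure_Cyl_ge (p a)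
    _ = cantorMeasure (⋃ a : ι, Cyl (p a)) :=
        (measure_iUnion hdisj fun a => measurable_Cyl (p a)).symm
    _ ≤ cantorMeasure Set.univ := measure_mono (Set.subset_univ _)
    _ ≤ 1 := cantorMeasure_univ_le

/- ## measure-zero of the non-randoms -/

def Bad (U : UniversalPrefixMachine) (c : ℕ) : Set BinStr :=
  {σ : BinStr | Kc U σ + c + 1 ≤ σ.length}

noncomputable def pmin (U : UniversalPrefixMachine) (σ : BinStr) : BinStr :=
  (KOr_spec U zeroSeq σ).choose

lemma pmin_len (U : UniversalPrefixMachine) (σ : BinStr) : (pmin U σ).length = Kc U σ :=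
  (KOr_spec U zeroSeq σ).choose_spec.1

lemma pmin_computes (U : UniversalPrefixMachine) (σ : BinStr) :
    U.toPrefixOracleMachine.Computes zeroSeq (pmin U σ) σ :=
  (KOr_spec U zeroSeq σ).choose_spec.2

lemma pmin_pf (U : UniversalPrefixMachine) {σ τ : BinStr} (h : pmin U σ <+: pmin U τ) : σ = τ :=
  (U_prefix_free U zeroSeq (pmin_computes U σ) (pmin_computes U τ) h).2

lemma tsum_Kc_le (U : UniversalPrefixMachine) (c : ℕ) :
    ∑' σ : Bad U c, ((2 : ℝ≥0∞) ^ (Kc U σ.1))⁻¹ ≤ 1 := by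
  have : Countable (Bad U c) := (Set.to_countable _).to_subtype
  have h := kraft (fun σ : Bad U c => pmin U σ.1)
    (fun a b hab => Subtype.ext (pmin_pf U hab))
  calc ∑' σ : Bad U c, ((2 : ℝ≥0∞) ^ (Kc U σ.1))⁻¹
      = ∑' σ : Bad U c, ((2 : ℝ≥0∞) ^ (pmin U σ.1).length)⁻¹ := by
        apply tsum_congr; intro a; rw [pmin_len]
    _ ≤ 1 := h

lemma badUnion_measure (U : UniversalPrefixMachine) (c : ℕ) :
    cantorMeasure (⋃ σ ∈ Bad U c, Cyl σ) ≤ ((2 : ℝ≥0∞) ^ (c+1))⁻¹ := by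
  have : Countable (Bad U c) := (Set.to_countable _).to_subtype
  calc cantorMeasure (⋃ σ ∈ Bad U c, Cyl σ)
      ≤ ∑' σ : Bad U c, cantorMeasure (Cyl σ.1) := by
        rw [Set.biUnion_eq_iUnion]
        exact measure_iUnion_le _
    _ ≤ ∑' σ : Bad U c, ((2 : ℝ≥0∞) ^ (σ.1).length)⁻¹ :=
        ENNReal.tsum_le_tsum fun σ => cantorMeasure_Cyl_le σ.1
    _ ≤ ∑' σ : Bad U c, ((2 : ℝ≥0∞) ^ (c+1))⁻¹ * ((2 : ℝ≥0∞) ^ (Kc U σ.1))⁻¹ := by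
        apply ENNReal.tsum_le_tsum
        intro σ
        rw [← ENNReal.mul_inv (Or.inl (by norm_num)) (Or.inl (by norm_num)), ← pow_add]
        apply ENNReal.inv_le_inv.2
        apply pow_le_pow_right₀ (by norm_num)
        have := σ.2
        simp only [Bad, Set.mem_setOf_eq] at this
        omega
    _ = ((2 : ℝ≥0∞) ^ (c+1))⁻¹ * ∑' σ : Bad U c, ((2 : ℝ≥0∞) ^ (Kc U σ.1))⁻¹ :=
        ENNReal.tsum_mul_left
    _ ≤ ((2 : ℝ≥0∞) ^ (c+1))⁻¹ * 1 := by
        exact mul_le_mul_right (tsum_Kc_le U c) _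
    _ = ((2 : ℝ≥0∞) ^ (c+1))⁻¹ := mul_one _

def NullCover (U : UniversalPrefixMachine) : Set Seq2 := ⋂ c : ℕ, ⋃ σ ∈ Bad U c, Cyl σ

lemma nullCover_null (U : UniversalPrefixMachine) : cantorMeasure (NullCover U) = 0 := by
  by_contra h
  obtain ⟨c, hc⟩ := ENNReal.exists_inv_two_pow_lt h
  have hle : cantorMeasure (NullCover U) ≤ ((2 : ℝ≥0∞) ^ (c+1+1))⁻¹ :=
    le_trans (measure_mono (Set.iInter_subset _ (c+1))) (badUnion_measure U (c+1))
  rw [← ENNReal.inv_pow] at hc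
  have : ((2 : ℝ≥0∞) ^ (c+1+1))⁻¹ ≤ ((2:ℝ≥0∞) ^ c)⁻¹ := by
    apply ENNReal.inv_le_inv.2
    apply pow_le_pow_right₀ (by norm_num) (by omega)
  exact absurd (le_trans hle this) (not_le.2 hc)

lemma nonrandom_subset_nullCover (U : UniversalPrefixMachine) {A : Seq2}
    (h : ¬ MLRandom U A) : A ∈ NullCover U := by
  rw [NullCover, Set.mem_iInter]
  intro c
  rw [MLRandom, not_exists] at h
  have := h c
  push_neg at this
  obtain ⟨n, hn⟩ := this
  refine Set.mem_biUnion (show restrict A n ∈ Bad U c by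
    simp only [Bad, Set.mem_setOf_eq, restrict_length']; omega) ?_
  show restrict A (restrict A n).length = restrict A n
  rw [restrict_length']

end Aux

/-- no ML-random real is K-trivial or low for K even up to the order log n,
so none is in KT(Δ⁰₂) or LK(Δ⁰₂); consequently both sets have uniform measure zero. -/
theorem stmt18 (U : UniversalPrefixMachine) :
    (∀ A : Seq2, MLRandom U A →
      ¬ KT U (fun n => Nat.log 2 n) A ∧
      ¬ LK U (fun σ => Nat.log 2 σ.length) A ∧
      ¬ KTDelta U A ∧ ¬ LKDelta U A) ∧
    cantorMeasure {A : Seq2 | KTDelta U A} = 0 ∧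
    cantorMeasure {A : Seq2 | LKDelta U A} = 0 := by
  obtain ⟨c₁, hc₁⟩ := KcNat_bound U
  obtain ⟨c₂, hc₂⟩ := KOr_restrict_bound U
  have hlogOrder : IsOrder (fun n => Nat.log 2 n) :=
    ⟨fun a b h => Nat.log_mono_right h,
     fun b => ⟨2 ^ (b+1), show b < Nat.log 2 (2^(b+1)) by rw [Nat.log_pow one_lt_two]; omega⟩⟩
  have hlogDelta : Delta02Fun (fun n => Nat.log 2 n) :=
    ⟨fun _ x => Nat.log 2 x, comp_logfun, fun x => ⟨0, fun s _ => rfl⟩⟩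
  -- strNum bounds
  have strNum_concat : ∀ (σ : BinStr) (b : Bool),
      strNum (σ ++ [b]) = 2 * strNum σ + (if b then 2 else 1) := by
    intro σ b
    simp [strNum, List.foldl_append]
  have strNum_bounds : ∀ σ : BinStr, 2 ^ σ.length - 1 ≤ strNum σ ∧
      strNum σ ≤ 2 ^ (σ.length + 1) - 2 := by
    intro σ
    induction σ using List.reverseRecOn with
    | nil => simp [strNum]
    | append_singleton σ b ih =>
      rw [strNum_concat]
      have h1 : (1:ℕ) ≤ 2 ^ σ.length := Nat.one_le_two_pow
      have h2 := ih.1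
      have h3 := ih.2
      have hb : (if b then 2 else 1) = 2 ∨ (if b then 2 else 1) = 1 := by cases b <;> simp
      have hl : (σ ++ [b]).length = σ.length + 1 := by simp
      rw [hl]
      have hp1 : 2 ^ (σ.length + 1) = 2 * 2 ^ σ.length := by rw [pow_succ]; ring
      have hp2 : 2 ^ (σ.length + 1 + 1) = 2 * 2 ^ (σ.length + 1) := by rw [pow_succ]; ring
      rcases hb with hb | hb <;> rw [hb] <;> omega
  have strNum_len_mono : ∀ σ τ : BinStr, strNum σ ≤ strNum τ → σ.length ≤ τ.length := by
    intro σ τ h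
    by_contra hc
    push_neg at hc
    have h1 := (strNum_bounds σ).1
    have h2 := (strNum_bounds τ).2
    have h3 : 2 ^ (τ.length + 1) ≤ 2 ^ σ.length :=
      Nat.pow_le_pow_right (by norm_num) (by omega)
    have h4 : (1:ℕ) ≤ 2 ^ τ.length := Nat.one_le_two_pow
    have h5 : (2:ℕ) ≤ 2 ^ (τ.length + 1) := by
      calc (2:ℕ) = 2^1 := rfl
        _ ≤ 2 ^ (τ.length + 1) := Nat.pow_le_pow_right (by norm_num) (by omega)
    omega
  have hlogStrOrder : IsStrOrder (fun σ : BinStr => Nat.log 2 σ.length) :=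
    ⟨fun σ τ h => Nat.log_mono_right (strNum_len_mono σ τ h),
     fun b => ⟨List.replicate (2 ^ (b+1)) false, by
        simp only [List.length_replicate]
        rw [Nat.log_pow one_lt_two]; omega⟩⟩
  have hlogStrDelta : Delta02StrFun (fun σ : BinStr => Nat.log 2 σ.length) :=
    ⟨fun _ σ => Nat.log 2 σ.length, comp_logstr, fun σ => ⟨0, fun s _ => rfl⟩⟩
  have main : ∀ A : Seq2, MLRandom U A →
      ¬ KT U (fun n => Nat.log 2 n) A ∧
      ¬ LK U (fun σ => Nat.log 2 σ.length) A ∧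
      ¬ KTDelta U A ∧ ¬ LKDelta U A := by
    intro A hA
    obtain ⟨c₀, hc₀⟩ := hA
    have hKT : ¬ KT U (fun n => Nat.log 2 n) A := by
      rintro ⟨c, hc⟩
      obtain ⟨n, hn⟩ := log_growth (3 + c₁ + c + c₀)
      have h4 : Kc U (restrict A n) ≤ KcNat U n + Nat.log 2 n + c := hc n
      have := hc₀ n
      have := hc₁ n
      omega
    have hLK : ¬ LK U (fun σ => Nat.log 2 σ.length) A := by
      rintro ⟨c, hc⟩
      obtain ⟨n, hn⟩ := log_growth (3 + c₂ + c + c₀)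
      have h1 := hc₀ n
      have h2 : Kc U (restrict A n) ≤ KOr U A (restrict A n) +
          Nat.log 2 (restrict A n).length + c := hc (restrict A n)
      rw [restrict_length'] at h2
      have h3 := hc₂ A n
      omega
    exact ⟨hKT, hLK,
      fun h => hKT (h _ hlogDelta hlogOrder),
      fun h => hLK (h _ hlogStrDelta hlogStrOrder)⟩
  refine ⟨main, ?_, ?_⟩
  · refine MeasureTheory.measure_mono_null ?_ (nullCover_null U)
    intro A hA
    apply nonrandom_subset_nullCover
    intro hrand
    exact (main A hrand).2.2.1 hA
  · refine MeasureTheory.measure_mono_null ?_ (nullCover_null U)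
    intro A hA
    apply nonrandom_subset_nullCover
    intro hrand
    exact (main A hrand).2.2.2 hA
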